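/- Let p > 2 be a prime, let f(X) = αX² + βX + γ be a quadratic polynomial over F_p with α ≠ 0, and let S = {(x,y) ∈ F_p² : y < f(x)}. Then for every d ∈ F_p with d ≠ 0 and every b ∈ F_p, pr_{S,d}(b) = pr_{S,1}( b − (β − (d+1)/2)·(d−1)/(2α) ). In particular, for all nonzero d the projection functions pr_{S,d} are cyclic shifts of pr_{S,1}. -/

import Mathlib

open Finset


/-- The projection function of the set `S = {(x,y) : y < f(x)}` from direction `d`:
`pr p f d b` is the number of points of `S` on the line `Y = d X + b`. -/
def parabolaProj (p : ℕ) [NeZero p] (f : ZMod p → ZMod p) (d b : ZMod p) : ℕ :=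
  (Finset.univ.filter fun x : ZMod p => (d * x + b).val < (f x).val).card

section aux
variable (p : ℕ) [Fact p.Prime]

lemma aux_succ_val (a : ZMod p) (h : a ≠ -1) : (a + 1).val = a.val + 1 := by
  have hp1 : 1 < p := (Fact.out : p.Prime).one_lt
  have hlt : a.val + 1 < p := by
    rcases lt_or_eq_of_le (Nat.succ_le_of_lt a.val_lt) with h' | h'
    · exact h'
    · exfalso; apply h
      have ha : a = ((a.val : ℕ) : ZMod p) := by simp [ZMod.natCast_val, ZMod.cast_id]
      rw [ha]
      have hv : (a.val : ℕ) = p - 1 := by omega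
      rw [hv]
      push_cast [Nat.cast_sub (by omega : 1 ≤ p)]
      simp
  rw [ZMod.val_add, ZMod.val_one, Nat.mod_eq_of_lt hlt]

/-- pointwise difference identity -/
lemma aux_pointwise (l fx : ZMod p) :
    ((if l.val < fx.val then (1:ℤ) else 0) - (if (l+1).val < fx.val then 1 else 0))
      = (if fx = l + 1 then 1 else 0) - (if l = -1 then 1 else 0) := by
  by_cases hl : l = -1
  · subst hl
    have hneg : ((-1:ZMod p)).val = p - 1 := by
      obtain ⟨n, rfl⟩ : ∃ n, p = n + 1 := ⟨p - 1, by have := (Fact.out : p.Prime).one_lt; omega⟩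
      simpa using ZMod.val_neg_one n
    simp only [neg_add_cancel, if_pos rfl]
    rw [hneg]
    have hfx := fx.val_lt
    by_cases hf : fx = 0
    · subst hf; simp
    · have : fx.val ≠ 0 := fun h => hf (by
        have : fx = ((fx.val : ℕ) : ZMod p) := by simp [ZMod.natCast_val, ZMod.cast_id]
        rw [this, h]; simp)
      rw [if_neg hf, if_neg (by omega), if_pos (by simp [ZMod.val_zero]; omega)]
      simp
  · rw [aux_succ_val p l hl, if_neg hl]
    by_cases hf : fx = l + 1
    · subst hf
      rw [aux_succ_val p l hl]
      simp
    · have hne : fx.val ≠ l.val + 1 := by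
        intro h
        apply hf
        have h1 : fx = ((fx.val : ℕ) : ZMod p) := by simp [ZMod.natCast_val, ZMod.cast_id]
        have h2 : l + 1 = (((l+1).val : ℕ) : ZMod p) := by simp [ZMod.natCast_val, ZMod.cast_id]
        rw [h1, h2, aux_succ_val p l hl, h]
      rw [if_neg hf]
      split_ifs with h1 h2 h2 <;> omega

/-- cast of filter card as integer sum -/
lemma aux_card_sum (q : ZMod p → Prop) [DecidablePred q] :
    ((univ.filter q).card : ℤ) = ∑ x : ZMod p, (if q x then (1:ℤ) else 0) := by
  rw [Finset.card_filter]
  push_cast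
  rfl

/-- unique solution of linear equation -/
lemma aux_linear_card (d b c : ZMod p) (hd : d ≠ 0) :
    (univ.filter fun x : ZMod p => d * x + b = c).card = 1 := by
  rw [Finset.card_eq_one]
  refine ⟨(c - b) * d⁻¹, ?_⟩
  ext x
  simp only [Finset.mem_filter, Finset.mem_univ, true_and, Finset.mem_singleton]
  constructor
  · intro h
    rw [eq_mul_inv_iff_mul_eq₀ hd]
    linear_combination h
  · intro h
    subst h
    field_simp
    ring

lemma aux_diff (f : ZMod p → ZMod p) (d b : ZMod p) (hd : d ≠ 0) :
    (parabolaProj p f d b : ℤ) - parabolaProj p f d (b+1)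
      = ((univ.filter fun x : ZMod p => f x = d * x + b + 1).card : ℤ) - 1 := by
  rw [parabolaProj, parabolaProj, aux_card_sum, aux_card_sum, aux_card_sum,
    ← Finset.sum_sub_distrib]
  have key : ∀ x : ZMod p,
      ((if (d*x+b).val < (f x).val then (1:ℤ) else 0)
        - (if (d*x+(b+1)).val < (f x).val then 1 else 0))
      = (if f x = d*x+b+1 then 1 else 0) - (if d*x+b = -1 then 1 else 0) := by
    intro x
    have h := aux_pointwise p (d*x+b) (f x)
    rw [show d*x+(b+1) = (d*x+b)+1 from by ring, show d*x+b+1 = (d*x+b)+1 from by ring]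
    exact h
  rw [Finset.sum_congr rfl (fun x _ => key x), Finset.sum_sub_distrib]
  have hs : ∑ x : ZMod p, (if d*x+b = -1 then (1:ℤ) else 0) = 1 := by
    rw [← aux_card_sum, aux_linear_card p d b (-1) hd]
    norm_num
  rw [hs]

lemma aux_roots (α β γ : ZMod p) (hα : α ≠ 0) (h2 : (2:ZMod p) ≠ 0) (d b : ZMod p) :
    (univ.filter fun x : ZMod p => α*x^2+β*x+γ = d*x + b + 1).card
      = (univ.filter fun x : ZMod p =>
          α*x^2+β*x+γ = 1*x + (b - (β - (d + 1) / 2) * ((d - 1) / (2 * α))) + 1).card := by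
  set s : ZMod p := (1 - d) / (2*α) with hs
  set b' : ZMod p := b - (β - (d + 1) / 2) * ((d - 1) / (2 * α)) with hb'
  have h2α : (2:ZMod p)*α ≠ 0 := mul_ne_zero h2 hα
  have ident : ∀ x : ZMod p,
      α*(x+s)^2 + β*(x+s) + γ - (1*(x+s) + b' + 1)
        = α*x^2+β*x+γ - (d*x+b+1) := by
    intro x
    rw [hs, hb']
    field_simp
    ring
  apply Finset.card_bij' (fun x _ => x + s) (fun y _ => y - s)
  · intro x hx
    simp only [Finset.mem_filter, Finset.mem_univ, true_and] at hx ⊢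
    have h' : α*x^2+β*x+γ - (d*x+b+1) = 0 := by rw [sub_eq_zero]; exact hx
    have h'' := ident x
    rw [h'] at h''
    rw [← sub_eq_zero]
    exact h''
  · intro y hy
    simp only [Finset.mem_filter, Finset.mem_univ, true_and] at hy ⊢
    have h'' := ident (y - s)
    rw [sub_add_cancel] at h''
    have h' : α*y^2+β*y+γ - (1*y + b' + 1) = 0 := by rw [sub_eq_zero]; exact hy
    rw [h'] at h''
    rw [← sub_eq_zero]
    exact h''.symm
  · intro x _; ring
  · intro y _; ring

lemma aux_val_card (m : ℕ) (hm : m ≤ p) :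
    (univ.filter fun y : ZMod p => y.val < m).card = m := by
  have h := Finset.card_bij' (s := univ.filter fun y : ZMod p => y.val < m)
    (t := Finset.range m) (fun y _ => y.val) (fun k hk => (k : ZMod p)) ?_ ?_ ?_ ?_
  · rw [h, Finset.card_range]
  · intro y hy
    simp only [Finset.mem_filter, Finset.mem_univ, true_and] at hy
    simpa using hy
  · intro k hk
    simp only [Finset.mem_range] at hk
    simp only [Finset.mem_filter, Finset.mem_univ, true_and]
    rwa [ZMod.val_cast_of_lt (lt_of_lt_of_le hk hm)]
  · intro y _
    simp [ZMod.natCast_val, ZMod.cast_id]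
  · intro k hk
    simp only [Finset.mem_range] at hk
    exact ZMod.val_cast_of_lt (lt_of_lt_of_le hk hm)

lemma aux_sum (f : ZMod p → ZMod p) (d : ZMod p) (hd : d ≠ 0) :
    ∑ b : ZMod p, parabolaProj p f d b = ∑ x : ZMod p, (f x).val := by
  unfold parabolaProj
  simp only [Finset.card_filter]
  rw [Finset.sum_comm]
  refine Finset.sum_congr rfl fun x _ => ?_
  rw [← Finset.card_filter]
  have hcb : (univ.filter fun b : ZMod p => (d*x+b).val < (f x).val).card
      = (univ.filter fun y : ZMod p => y.val < (f x).val).card := by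
    apply Finset.card_bij' (fun b _ => d*x + b) (fun y _ => y - d*x)
    · intro b hb
      simpa using (Finset.mem_filter.mp hb).2
    · intro y hy
      simp only [Finset.mem_filter, Finset.mem_univ, true_and] at hy ⊢
      rwa [show d*x + (y - d*x) = y from by ring]
    · intro b _; ring
    · intro y _; ring
  rw [hcb, aux_val_card p _ (le_of_lt (f x).val_lt)]

end aux


/-- For every nonzero direction `d`, the projection function of the set of points below
the parabola `Y = αX² + βX + γ` is a cyclic shift of the projection function from
direction `1`:  `pr_{S,d}(b) = pr_{S,1}(b − (β − (d+1)/2)·(d−1)/(2α))`. -/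
theorem proj_below_parabola_shift (p : ℕ) [Fact p.Prime] (hp : 2 < p)
    (α β γ : ZMod p) (hα : α ≠ 0) (d : ZMod p) (hd : d ≠ 0) (b : ZMod p) :
    parabolaProj p (fun x => α * x ^ 2 + β * x + γ) d b =
      parabolaProj p (fun x => α * x ^ 2 + β * x + γ) 1
        (b - (β - (d + 1) / 2) * ((d - 1) / (2 * α))) := by
  have h2 : (2 : ZMod p) ≠ 0 := by
    intro h
    have h2' : ((2:ℕ) : ZMod p) = 0 := by exact_mod_cast h
    rw [ZMod.natCast_eq_zero_iff] at h2'
    have := Nat.le_of_dvd (by norm_num) h2'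
    omega
  set f : ZMod p → ZMod p := fun x => α * x ^ 2 + β * x + γ with hf
  set w : ZMod p := (β - (d + 1) / 2) * ((d - 1) / (2 * α)) with hw
  set F : ZMod p → ℤ := fun c => (parabolaProj p f d c : ℤ) - parabolaProj p f 1 (c - w)
    with hF
  have hstep : ∀ c : ZMod p, F c = F (c + 1) := by
    intro c
    have hDd := aux_diff p f d c hd
    have hD1 := aux_diff p f 1 (c - w) one_ne_zero
    have hroots := aux_roots p α β γ hα h2 d c
    have hcw : c + 1 - w = (c - w) + 1 := by ring
    simp only [hF, hcw]
    have : (parabolaProj p f d c : ℤ) - parabolaProj p f d (c+1)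
        = (parabolaProj p f 1 (c - w) : ℤ) - parabolaProj p f 1 ((c - w) + 1) := by
      rw [hDd, hD1, sub_left_inj]
      exact_mod_cast hroots
    linarith [this]
  have hn : ∀ (n : ℕ) (c : ZMod p), F (c + (n : ZMod p)) = F c := by
    intro n
    induction n with
    | zero => intro c; simp
    | succ k ih =>
      intro c
      have : c + ((k+1 : ℕ) : ZMod p) = (c + (k : ℕ)) + 1 := by push_cast; ring
      rw [this, ← hstep, ih]
  have hconst : ∀ c : ZMod p, F c = F b := by
    intro c
    have : c = b + (((c - b).val : ℕ) : ZMod p) := by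
      rw [ZMod.natCast_val, ZMod.cast_id]; ring
    rw [this, hn]
  have hsumF : ∑ c : ZMod p, F c = 0 := by
    simp only [hF, Finset.sum_sub_distrib]
    rw [sub_eq_zero]
    have h1 : ∑ c : ZMod p, (parabolaProj p f d c : ℤ)
        = ((∑ x : ZMod p, (f x).val : ℕ) : ℤ) := by
      rw [← aux_sum p f d hd]; push_cast; rfl
    have h2' : ∑ c : ZMod p, (parabolaProj p f 1 (c - w) : ℤ)
        = ((∑ x : ZMod p, (f x).val : ℕ) : ℤ) := by
      rw [show (∑ c : ZMod p, (parabolaProj p f 1 (c - w) : ℤ))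
          = ∑ c : ZMod p, (parabolaProj p f 1 c : ℤ) from
        Fintype.sum_equiv (Equiv.subRight w) _ _ (fun c => rfl)]
      rw [← aux_sum p f 1 one_ne_zero]; push_cast; rfl
    rw [h1, h2']
  have hcard : (Finset.univ : Finset (ZMod p)).card = p := by
    simp [ZMod.card]
  have hp0 : (p : ℤ) * F b = 0 := by
    have : ∑ c : ZMod p, F c = (Finset.univ : Finset (ZMod p)).card • F b :=
      Finset.sum_congr rfl (fun c _ => hconst c) |>.trans (by rw [Finset.sum_const])
    rw [hsumF, hcard] at this
    simpa [nsmul_eq_mul] using this.symm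
  have hFb : F b = 0 := by
    have hpne : (p : ℤ) ≠ 0 := by exact_mod_cast (Nat.Prime.ne_zero Fact.out)
    exact (mul_eq_zero.mp hp0).resolve_left hpne
  have := sub_eq_zero.mp hFb
  exact_mod_cast this
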